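/- arXiv:2508.14147 — 2 statements merged into one kernel-verified Lean document; each statement's English description precedes it below -/
import Mathlib

section
/- Let G be a temporal graph and k ≥ 1 an integer. Let [t1,t2] be a minimal core window of some temporal edge such that no temporal edge of G has a minimal core window [t1',t2] with t1' > t1 (i.e., ending at t2 and starting strictly later than t1). Then there exists a temporal edge e with timestamp exactly t2 such that [t1,t2] is a minimal core window of e. -/
variable {V : Type*} [Fintype V]

/-- A vertex set `S` is `k`-dense in `G` if every vertex of `S` has
at least `k` neighbors of `G` lying in `S`. -/
def KDense (G : SimpleGraph V) (k : ℕ) (S : Set V) : Prop :=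
  ∀ v ∈ S, k ≤ (S ∩ G.neighborSet v).ncard

/-- The `k`-core of `G`: the union of all `k`-dense vertex sets. -/
def kCore (G : SimpleGraph V) (k : ℕ) : Set V :=
  ⋃₀ {S | KDense G k S}

/-- A temporal graph on a vertex set `V`: a finite set of temporal edges
`(u, v, t)` with `u ≠ v` and integer timestamp `t`. -/
structure TemporalGraph (V : Type*) where
  E : Finset (V × V × ℤ)
  ne : ∀ e ∈ E, e.1 ≠ e.2.1

/-- The projected (snapshot) graph of `G` over the time window `[ts, te]`. -/
def TemporalGraph.proj (G : TemporalGraph V) (ts te : ℤ) : SimpleGraph V where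
  Adj u v := ∃ t, ts ≤ t ∧ t ≤ te ∧ ((u, v, t) ∈ G.E ∨ (v, u, t) ∈ G.E)
  symm := by
    constructor
    rintro u v ⟨t, h1, h2, h3⟩
    exact ⟨t, h1, h2, h3.symm⟩
  loopless := by
    constructor
    rintro u ⟨t, h1, h2, h3⟩
    rcases h3 with h | h <;> exact G.ne _ h rfl

/-- The temporal `k`-core of the window `[ts, te]`: all temporal edges with
timestamp in `[ts, te]` whose both endpoints lie in the `k`-core of the
projected graph `G_[ts,te]`. -/
def TemporalGraph.tCore (G : TemporalGraph V) (k : ℕ) (ts te : ℤ) :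
    Set (V × V × ℤ) :=
  {e | e ∈ G.E ∧ ts ≤ e.2.2 ∧ e.2.2 ≤ te ∧
    e.1 ∈ kCore (G.proj ts te) k ∧ e.2.1 ∈ kCore (G.proj ts te) k}

/-- `[t1, t2]` is a minimal core window of the temporal edge `e`:
`e` lies in the temporal `k`-core of `[t1, t2]` but in no temporal `k`-core
of a window properly contained in `[t1, t2]`. -/
def MinCoreWindow (G : TemporalGraph V) (k : ℕ) (e : V × V × ℤ)
    (t1 t2 : ℤ) : Prop :=
  e ∈ G.tCore k t1 t2 ∧
  ∀ ts' te', t1 ≤ ts' → te' ≤ t2 → (ts', te') ≠ (t1, t2) →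
    e ∉ G.tCore k ts' te'

lemma kDense_kCore (G : SimpleGraph V) (k : ℕ) : KDense G k (kCore G k) := by
  intro v hv
  obtain ⟨S, hS, hvS⟩ := hv
  calc k ≤ (S ∩ G.neighborSet v).ncard := hS v hvS
    _ ≤ (kCore G k ∩ G.neighborSet v).ncard :=
        Set.ncard_le_ncard
          (Set.inter_subset_inter_left _ (Set.subset_sUnion_of_mem hS))
          (Set.toFinite _)

theorem exists_edge_at_end_of_min_window (G : TemporalGraph V) (k : ℕ)
    (hk : 1 ≤ k) (t1 t2 : ℤ)
    (h : ∃ e : V × V × ℤ, MinCoreWindow G k e t1 t2)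
    (hmax : ∀ (e : V × V × ℤ) (t1' : ℤ),
      MinCoreWindow G k e t1' t2 → ¬ t1 < t1') :
    ∃ e : V × V × ℤ, e.2.2 = t2 ∧ MinCoreWindow G k e t1 t2 := by
  obtain ⟨e, he⟩ := h
  by_cases hf : ∃ f ∈ G.tCore k t1 t2, f.2.2 = t2
  · obtain ⟨f, hfc, hft⟩ := hf
    obtain ⟨t1', ⟨ht1le, hfc'⟩, hgr⟩ :=
      Int.exists_greatest_of_bdd (P := fun s => t1 ≤ s ∧ f ∈ G.tCore k s t2)
        ⟨t2, fun z hz => hz.2.2.1.trans (le_of_eq hft)⟩ ⟨t1, le_refl t1, hfc⟩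
    have hmcw : MinCoreWindow G k f t1' t2 := by
      refine ⟨hfc', fun ts' te' h1 h2 hne hmem => ?_⟩
      have hte : te' = t2 := le_antisymm h2 (hft ▸ hmem.2.2.1)
      subst hte
      have hle : ts' ≤ t1' := hgr ts' ⟨ht1le.trans h1, hmem⟩
      exact hne (by rw [le_antisymm hle h1])
    have ht1 : t1' = t1 := le_antisymm (not_lt.mp (hmax f t1' hmcw)) ht1le
    exact ⟨f, hft, ht1 ▸ hmcw⟩
  · push_neg at hf
    exfalso
    have hsub : kCore (G.proj t1 t2) k ⊆ kCore (G.proj t1 (t2 - 1)) k := by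
      apply Set.subset_sUnion_of_mem
      intro v hv
      have base := kDense_kCore (G.proj t1 t2) k v hv
      refine le_trans base (Set.ncard_le_ncard ?_ (Set.toFinite _))
      rintro u ⟨huC, t, ht1, ht2, hE⟩
      have htne : t ≠ t2 := by
        intro heq
        rcases hE with hE | hE
        · exact hf (v, u, t) ⟨hE, ht1, heq.le, hv, huC⟩ heq
        · exact hf (u, v, t) ⟨hE, ht1, heq.le, huC, hv⟩ heq
      exact ⟨huC, t, ht1, by omega, hE⟩
    have het : e.2.2 ≠ t2 := fun hh => hf e he.1 hh
    have : e ∈ G.tCore k t1 (t2 - 1) :=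
      ⟨he.1.1, he.1.2.1, by have := he.1.2.2.1; omega,
        hsub he.1.2.2.2.1, hsub he.1.2.2.2.2⟩
    exact he.2 t1 (t2 - 1) le_rfl (by omega) (by simp) this
end

section
/- Let G be a temporal graph, k ≥ 1 an integer, and ts < te timestamps. If no temporal edge of G has a minimal core window [t1,te] with ts ≤ t1 (i.e., a minimal core window contained in [ts,te] that ends exactly at te), then C_[ts,te] = C_[ts,te-1]. -/
variable {V : Type*} [Fintype V]

lemma kCore_mono' {G G' : SimpleGraph V} (h : G ≤ G') (k : ℕ) :
    kCore G k ⊆ kCore G' k := by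
  intro v hv
  rcases hv with ⟨S, hS, hvS⟩
  refine ⟨S, fun w hw => le_trans (hS w hw) ?_, hvS⟩
  exact Set.ncard_le_ncard
    (Set.inter_subset_inter_right _ (fun x hx => h hx)) (Set.toFinite _)

lemma tCore_mono' (G : TemporalGraph V) (k : ℕ) {ts te ts' te' : ℤ}
    (h1 : ts ≤ ts') (h2 : te' ≤ te) :
    G.tCore k ts' te' ⊆ G.tCore k ts te := by
  rintro e ⟨he, ha, hb, hc, hd⟩
  have hp : G.proj ts' te' ≤ G.proj ts te := by
    rintro u v ⟨t, h3, h4, h5⟩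
    exact ⟨t, h1.trans h3, h4.trans h2, h5⟩
  exact ⟨he, h1.trans ha, hb.trans h2, kCore_mono' hp k hc, kCore_mono' hp k hd⟩

theorem tCore_eq_pred_of_no_min_window_ending_at (G : TemporalGraph V)
    (k : ℕ) (hk : 1 ≤ k) (ts te : ℤ) (hlt : ts < te)
    (hno : ∀ (e : V × V × ℤ) (t1 : ℤ), ts ≤ t1 →
      ¬ MinCoreWindow G k e t1 te) :
    G.tCore k ts te = G.tCore k ts (te - 1) := by
  ext e
  constructor
  · intro he
    by_contra hne
    obtain ⟨t1, ⟨hts1, h1core⟩, hmax⟩ :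
        ∃ t1, (ts ≤ t1 ∧ e ∈ G.tCore k t1 te) ∧
          ∀ z, (ts ≤ z ∧ e ∈ G.tCore k z te) → z ≤ t1 := by
      apply Int.exists_greatest_of_bdd
      · exact ⟨te, fun z hz => hz.2.2.1.trans hz.2.2.2.1⟩
      · exact ⟨ts, le_refl ts, he⟩
    refine hno e t1 hts1 ⟨h1core, ?_⟩
    intro ts' te' hts' hte' hne' hmem
    by_cases hcase : te' = te
    · subst hcase
      have h1 : ts' ≤ t1 := hmax ts' ⟨hts1.trans hts', hmem⟩
      exact hne' (by simp [le_antisymm h1 hts'])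
    · have hte'' : te' ≤ te - 1 := by omega
      exact hne (tCore_mono' G k (hts1.trans hts') hte'' hmem)
  · intro he
    exact tCore_mono' G k le_rfl (by omega) he
end
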